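/- arXiv:1912.04555 — 2 statements merged into one kernel-verified Lean document; each statement's English description precedes it below -/
import Mathlib

section
/- Let ψ : (0,2) → (0,∞) be a left continuous increasing function and Ω_ψ = {(t,x) ∈ (0,2) × ℝ^{n-1} : |x| < ψ(t)}. Then Ω_ψ is quasiconvex: there exists C ≥ 1 such that any two points z₁, z₂ ∈ Ω_ψ can be joined by a rectifiable curve γ in Ω_ψ with length(γ) ≤ C |z₁ − z₂|. -/
open MeasureTheory Set Metric Filter
open scoped ENNReal Topology
open scoped NNReal

noncomputable section

/-- The Euclidean (ℓ²) structure on the product `ℝ × ℝ^{n-1}`. -/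
def toL2 {m : ℕ} (z : ℝ × EuclideanSpace ℝ (Fin m)) :
    WithLp 2 (ℝ × EuclideanSpace ℝ (Fin m)) :=
  (WithLp.equiv 2 (ℝ × EuclideanSpace ℝ (Fin m))).symm z

private theorem dist_fst_eq_of_snd_eq {α β : Type*} [SeminormedAddCommGroup α]
    [SeminormedAddCommGroup β] (x y : WithLp 2 (α × β)) (h : x.snd = y.snd) :
    dist x y = dist x.fst y.fst := by
  rw [WithLp.prod_dist_eq_of_L2, h, dist_self]
  simp [Real.sqrt_sq dist_nonneg]

private theorem dist_snd_eq_of_fst_eq {α β : Type*} [SeminormedAddCommGroup α]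
    [SeminormedAddCommGroup β] (x y : WithLp 2 (α × β)) (h : x.fst = y.fst) :
    dist x y = dist x.snd y.snd := by
  rw [WithLp.prod_dist_eq_of_L2, h, dist_self]
  simp [Real.sqrt_sq dist_nonneg]

private theorem dist_fst_le' {α β : Type*} [SeminormedAddCommGroup α]
    [SeminormedAddCommGroup β] (x y : WithLp 2 (α × β)) : dist x.fst y.fst ≤ dist x y := by
  rw [WithLp.prod_dist_eq_of_L2]
  exact (Real.le_sqrt dist_nonneg (by positivity)).2 (le_add_of_nonneg_right (sq_nonneg _))

private theorem dist_snd_le' {α β : Type*} [SeminormedAddCommGroup α]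
    [SeminormedAddCommGroup β] (x y : WithLp 2 (α × β)) : dist x.snd y.snd ≤ dist x y := by
  rw [WithLp.prod_dist_eq_of_L2]
  exact (Real.le_sqrt dist_nonneg (by positivity)).2 (le_add_of_nonneg_left (sq_nonneg _))

private theorem lip_two : LipschitzWith 2 (fun s : ℝ => 2 * s) :=
  LipschitzWith.of_dist_le_mul fun x y => by
    simp [Real.dist_eq, ← mul_sub, abs_mul]

private theorem lip_two' : LipschitzWith 2 (fun s : ℝ => 2 * s - 1) :=
  LipschitzWith.of_dist_le_mul fun x y => by
    have : 2 * x - 1 - (2 * y - 1) = 2 * (x - y) := by ring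
    rw [Real.dist_eq, Real.dist_eq, this, abs_mul]
    simp

private theorem var_lip {F : Type*} [PseudoEMetricSpace F] {f : ℝ → F} {K : ℝ≥0}
    (h : LipschitzWith K f) {a c : ℝ} (hac : a ≤ c) :
    eVariationOn f (Icc a c) ≤ K * ENNReal.ofReal (c - a) := by
  have h1 : eVariationOn (f ∘ id) (Icc a c) ≤ K * eVariationOn id (Icc a c) :=
    LipschitzOnWith.comp_eVariationOn_le (h.lipschitzOnWith (s := univ)) (mapsTo_univ id _)
  have h2 : eVariationOn (id : ℝ → ℝ) (Icc a c) ≤ ENNReal.ofReal (c - a) := by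
    have := (monotoneOn_id (s := Icc a c)).eVariationOn_le
      (left_mem_Icc.2 hac) (right_mem_Icc.2 hac)
    rwa [inter_self] at this
  calc eVariationOn f (Icc a c) = eVariationOn (f ∘ id) (Icc a c) := rfl
    _ ≤ K * eVariationOn id (Icc a c) := h1
    _ ≤ K * ENNReal.ofReal (c - a) := mul_le_mul_right h2 _

private theorem seg_mem {m : ℕ} (ψ : ℝ → ℝ)
    (hmono : ∀ s ∈ Ioo (0:ℝ) 2, ∀ t ∈ Ioo (0:ℝ) 2, s ≤ t → ψ s ≤ ψ t)
    {w₁ w₂ : ℝ × EuclideanSpace ℝ (Fin m)}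
    (h₁ : w₁.1 ∈ Ioo (0:ℝ) 2) (h₂ : w₂.1 ∈ Ioo (0:ℝ) 2)
    (hn : max ‖w₁.2‖ ‖w₂.2‖ < ψ (min w₁.1 w₂.1)) :
    ∀ u ∈ Icc (0:ℝ) 1, (AffineMap.lineMap w₁ w₂ u).1 ∈ Ioo (0:ℝ) 2 ∧
      ‖(AffineMap.lineMap w₁ w₂ u).2‖ < ψ (AffineMap.lineMap w₁ w₂ u).1 := by
  intro u hu
  obtain ⟨hu0, hu1⟩ := hu
  have hu1' : (0:ℝ) ≤ 1 - u := by linarith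
  have e : AffineMap.lineMap w₁ w₂ u = (1-u) • w₁ + u • w₂ :=
    AffineMap.lineMap_apply_module _ _ _
  have e1 : (AffineMap.lineMap w₁ w₂ u).1 = (1-u) * w₁.1 + u * w₂.1 := by rw [e]; rfl
  have e2 : (AffineMap.lineMap w₁ w₂ u).2 = (1-u) • w₁.2 + u • w₂.2 := by rw [e]; rfl
  have hmin : min w₁.1 w₂.1 ≤ (1-u) * w₁.1 + u * w₂.1 := by
    calc min w₁.1 w₂.1 = (1-u) * min w₁.1 w₂.1 + u * min w₁.1 w₂.1 := by ring
    _ ≤ _ := add_le_add (mul_le_mul_of_nonneg_left (min_le_left _ _) hu1')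
                        (mul_le_mul_of_nonneg_left (min_le_right _ _) hu0)
  have hmax : (1-u) * w₁.1 + u * w₂.1 ≤ max w₁.1 w₂.1 := by
    calc (1-u) * w₁.1 + u * w₂.1
        ≤ (1-u) * max w₁.1 w₂.1 + u * max w₁.1 w₂.1 :=
          add_le_add (mul_le_mul_of_nonneg_left (le_max_left _ _) hu1')
                     (mul_le_mul_of_nonneg_left (le_max_right _ _) hu0)
    _ = max w₁.1 w₂.1 := by ring
  have hT : (AffineMap.lineMap w₁ w₂ u).1 ∈ Ioo (0:ℝ) 2 := by
    rw [e1]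
    exact ⟨lt_of_lt_of_le (lt_min h₁.1 h₂.1) hmin, lt_of_le_of_lt hmax (max_lt h₁.2 h₂.2)⟩
  refine ⟨hT, ?_⟩
  have hnorm : ‖(AffineMap.lineMap w₁ w₂ u).2‖ ≤ max ‖w₁.2‖ ‖w₂.2‖ := by
    rw [e2]
    calc ‖(1-u) • w₁.2 + u • w₂.2‖ ≤ ‖(1-u) • w₁.2‖ + ‖u • w₂.2‖ := norm_add_le _ _
    _ = (1-u) * ‖w₁.2‖ + u * ‖w₂.2‖ := by
        rw [norm_smul, norm_smul, Real.norm_of_nonneg hu1', Real.norm_of_nonneg hu0]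
    _ ≤ (1-u) * max ‖w₁.2‖ ‖w₂.2‖ + u * max ‖w₁.2‖ ‖w₂.2‖ :=
        add_le_add (mul_le_mul_of_nonneg_left (le_max_left _ _) hu1')
                   (mul_le_mul_of_nonneg_left (le_max_right _ _) hu0)
    _ = max ‖w₁.2‖ ‖w₂.2‖ := by ring
  have hmin_mem : min w₁.1 w₂.1 ∈ Ioo (0:ℝ) 2 :=
    ⟨lt_min h₁.1 h₂.1, lt_of_le_of_lt (min_le_left _ _) h₁.2⟩
  have hmin' : min w₁.1 w₂.1 ≤ (AffineMap.lineMap w₁ w₂ u).1 := by rw [e1]; exact hmin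
  exact lt_of_le_of_lt hnorm (lt_of_lt_of_le hn (hmono _ hmin_mem _ hT hmin'))

/-- The cuspidal domain `Ω_ψ` is quasiconvex: there is `C ≥ 1` such that any
two of its points can be joined by a rectifiable curve in `Ω_ψ` whose (Euclidean) length is
at most `C` times the (Euclidean) distance of the endpoints. -/
theorem cusp_quasiconvex {m : ℕ} (ψ : ℝ → ℝ)
    (hpos : ∀ t ∈ Ioo (0:ℝ) 2, 0 < ψ t)
    (hmono : ∀ s ∈ Ioo (0:ℝ) 2, ∀ t ∈ Ioo (0:ℝ) 2, s ≤ t → ψ s ≤ ψ t)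
    (hlc : ∀ t ∈ Ioo (0:ℝ) 2, Tendsto ψ (nhdsWithin t (Ioo 0 t)) (nhds (ψ t)))
    (hext : ∀ t ∈ Ioo (1:ℝ) 2, ψ t = ψ 1) :
    ∃ C : ℝ, 1 ≤ C ∧
      ∀ z₁ ∈ {z : ℝ × EuclideanSpace ℝ (Fin m) | z.1 ∈ Ioo (0:ℝ) 2 ∧ ‖z.2‖ < ψ z.1},
      ∀ z₂ ∈ {z : ℝ × EuclideanSpace ℝ (Fin m) | z.1 ∈ Ioo (0:ℝ) 2 ∧ ‖z.2‖ < ψ z.1},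
        ∃ γ : ℝ → ℝ × EuclideanSpace ℝ (Fin m),
          ContinuousOn γ (Icc 0 1) ∧ γ 0 = z₁ ∧ γ 1 = z₂ ∧
          MapsTo γ (Icc 0 1)
            {z : ℝ × EuclideanSpace ℝ (Fin m) | z.1 ∈ Ioo (0:ℝ) 2 ∧ ‖z.2‖ < ψ z.1} ∧
          eVariationOn (fun s => toL2 (γ s)) (Icc 0 1) ≤
            ENNReal.ofReal (C * dist (toL2 z₁) (toL2 z₂)) := by
  classical
  refine ⟨2, one_le_two, ?_⟩
  intro z₁ hz₁ z₂ hz₂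
  obtain ⟨ht₁, hx₁⟩ := hz₁
  obtain ⟨ht₂, hx₂⟩ := hz₂
  set b : ℝ × EuclideanSpace ℝ (Fin m) :=
    if z₁.1 ≤ z₂.1 then (z₂.1, z₁.2) else (z₁.1, z₂.2) with hbdef
  have hb₁ : b.1 ∈ Ioo (0:ℝ) 2 := by
    by_cases h : z₁.1 ≤ z₂.1 <;> simp only [hbdef, h, if_true, if_false] <;> assumption
  -- the two segments stay in the domain
  have seg1 : ∀ u ∈ Icc (0:ℝ) 1, (AffineMap.lineMap z₁ b u).1 ∈ Ioo (0:ℝ) 2 ∧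
      ‖(AffineMap.lineMap z₁ b u).2‖ < ψ (AffineMap.lineMap z₁ b u).1 := by
    apply seg_mem ψ hmono ht₁ hb₁
    by_cases h : z₁.1 ≤ z₂.1
    · simp only [hbdef, h, if_true]
      rw [max_self, min_eq_left h]
      exact hx₁
    · simp only [hbdef, h, if_false]
      rw [min_self]
      push_neg at h
      exact max_lt hx₁ (lt_of_lt_of_le hx₂ (hmono _ ht₂ _ ht₁ h.le))
  have seg2 : ∀ u ∈ Icc (0:ℝ) 1, (AffineMap.lineMap b z₂ u).1 ∈ Ioo (0:ℝ) 2 ∧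
      ‖(AffineMap.lineMap b z₂ u).2‖ < ψ (AffineMap.lineMap b z₂ u).1 := by
    apply seg_mem ψ hmono hb₁ ht₂
    by_cases h : z₁.1 ≤ z₂.1
    · simp only [hbdef, h, if_true]
      rw [min_self]
      exact max_lt (lt_of_lt_of_le hx₁ (hmono _ ht₁ _ ht₂ h)) hx₂
    · simp only [hbdef, h, if_false]
      push_neg at h
      rw [max_self, min_eq_right h.le]
      exact hx₂
  -- distance comparisons
  have hd1 : dist (toL2 z₁) (toL2 b) ≤ dist (toL2 z₁) (toL2 z₂) := by
    by_cases h : z₁.1 ≤ z₂.1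
    · have : dist (toL2 z₁) (toL2 b) = dist (toL2 z₁).fst (toL2 z₂).fst := by
        rw [dist_fst_eq_of_snd_eq]
        · simp only [hbdef, h, if_true]; rfl
        · simp only [hbdef, h, if_true]; rfl
      rw [this]
      exact dist_fst_le' _ _
    · have : dist (toL2 z₁) (toL2 b) = dist (toL2 z₁).snd (toL2 z₂).snd := by
        rw [dist_snd_eq_of_fst_eq]
        · simp only [hbdef, h, if_false]; rfl
        · simp only [hbdef, h, if_false]; rfl
      rw [this]
      exact dist_snd_le' _ _
  have hd2 : dist (toL2 b) (toL2 z₂) ≤ dist (toL2 z₁) (toL2 z₂) := by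
    by_cases h : z₁.1 ≤ z₂.1
    · have : dist (toL2 b) (toL2 z₂) = dist (toL2 z₁).snd (toL2 z₂).snd := by
        rw [dist_snd_eq_of_fst_eq]
        · simp only [hbdef, h, if_true]; rfl
        · simp only [hbdef, h, if_true]; rfl
      rw [this]
      exact dist_snd_le' _ _
    · have : dist (toL2 b) (toL2 z₂) = dist (toL2 z₁).fst (toL2 z₂).fst := by
        rw [dist_fst_eq_of_snd_eq]
        · simp only [hbdef, h, if_false]; rfl
        · simp only [hbdef, h, if_false]; rfl
      rw [this]
      exact dist_fst_le' _ _
  -- the L-shaped path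
  set γ : ℝ → ℝ × EuclideanSpace ℝ (Fin m) :=
    fun s => if s ≤ 1/2 then AffineMap.lineMap z₁ b (2*s) else AffineMap.lineMap b z₂ (2*s-1)
    with hγdef
  have hbound : ∀ s : ℝ, s = 1/2 →
      (AffineMap.lineMap z₁ b (2*s) : ℝ × EuclideanSpace ℝ (Fin m)) =
        AffineMap.lineMap b z₂ (2*s-1) := by
    intro s hs
    rw [hs]
    norm_num
  have hcont : Continuous γ := by
    refine Continuous.if_le ?_ ?_ continuous_id continuous_const hbound
    · exact AffineMap.lineMap_continuous.comp (by fun_prop)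
    · exact AffineMap.lineMap_continuous.comp (by fun_prop)
  have hγ0 : γ 0 = z₁ := by
    simp only [hγdef]
    norm_num
  have hγ1 : γ 1 = z₂ := by
    simp only [hγdef]
    norm_num
  refine ⟨γ, hcont.continuousOn, hγ0, hγ1, ?_, ?_⟩
  · intro s hs
    simp only [hγdef, mem_setOf_eq]
    split_ifs with h
    · exact seg1 (2*s) ⟨by linarith [hs.1], by linarith⟩
    · push_neg at h
      exact seg2 (2*s-1) ⟨by linarith, by linarith [hs.2]⟩
  · have hsplit := eVariationOn.Icc_add_Icc (fun s => toL2 (γ s)) (s := univ)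
      (by norm_num : (0:ℝ) ≤ 1/2) (by norm_num : (1:ℝ)/2 ≤ 1) (mem_univ _)
    simp only [univ_inter] at hsplit
    have e1 : eVariationOn (fun s => toL2 (γ s)) (Icc 0 (1/2)) =
        eVariationOn (fun s : ℝ => AffineMap.lineMap (toL2 z₁) (toL2 b) (2*s)) (Icc 0 (1/2)) := by
      apply eVariationOn.eq_of_eqOn
      intro s hs
      simp only [hγdef, if_pos hs.2]
      rfl
    have e2 : eVariationOn (fun s => toL2 (γ s)) (Icc (1/2) 1) =
        eVariationOn (fun s : ℝ => AffineMap.lineMap (toL2 b) (toL2 z₂) (2*s-1)) (Icc (1/2) 1) := by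
      apply eVariationOn.eq_of_eqOn
      intro s hs
      by_cases h : s ≤ 1/2
      · have hs2 : s = 1/2 := le_antisymm h hs.1
        simp only [hγdef, if_pos h, hbound s hs2]
        rfl
      · simp only [hγdef, if_neg h]
        rfl
    have p1 : eVariationOn (fun s => toL2 (γ s)) (Icc 0 (1/2)) ≤
        ENNReal.ofReal (dist (toL2 z₁) (toL2 b)) := by
      rw [e1]
      have lip : LipschitzWith (nndist (toL2 z₁) (toL2 b) * 2)
          (fun s : ℝ => AffineMap.lineMap (toL2 z₁) (toL2 b) (2*s)) :=
        (lipschitzWith_lineMap (toL2 z₁) (toL2 b)).comp lip_two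
      refine le_trans (var_lip lip (by norm_num)) ?_
      rw [ENNReal.coe_mul, ← edist_nndist, edist_dist,
        show ((2:ℝ≥0):ℝ≥0∞) = ENNReal.ofReal 2 by simp,
        ← ENNReal.ofReal_mul dist_nonneg, ← ENNReal.ofReal_mul (by positivity)]
      exact ENNReal.ofReal_le_ofReal (le_of_eq (by ring))
    have p2 : eVariationOn (fun s => toL2 (γ s)) (Icc (1/2) 1) ≤
        ENNReal.ofReal (dist (toL2 b) (toL2 z₂)) := by
      rw [e2]
      have lip : LipschitzWith (nndist (toL2 b) (toL2 z₂) * 2)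
          (fun s : ℝ => AffineMap.lineMap (toL2 b) (toL2 z₂) (2*s-1)) :=
        (lipschitzWith_lineMap (toL2 b) (toL2 z₂)).comp lip_two'
      refine le_trans (var_lip lip (by norm_num)) ?_
      rw [ENNReal.coe_mul, ← edist_nndist, edist_dist,
        show ((2:ℝ≥0):ℝ≥0∞) = ENNReal.ofReal 2 by simp,
        ← ENNReal.ofReal_mul dist_nonneg, ← ENNReal.ofReal_mul (by positivity)]
      exact ENNReal.ofReal_le_ofReal (le_of_eq (by ring))
    calc eVariationOn (fun s => toL2 (γ s)) (Icc 0 1)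
        = eVariationOn (fun s => toL2 (γ s)) (Icc 0 (1/2)) +
          eVariationOn (fun s => toL2 (γ s)) (Icc (1/2) 1) := hsplit.symm
      _ ≤ ENNReal.ofReal (dist (toL2 z₁) (toL2 b)) +
          ENNReal.ofReal (dist (toL2 b) (toL2 z₂)) := add_le_add p1 p2
      _ = ENNReal.ofReal (dist (toL2 z₁) (toL2 b) + dist (toL2 b) (toL2 z₂)) :=
          (ENNReal.ofReal_add dist_nonneg dist_nonneg).symm
      _ ≤ ENNReal.ofReal (2 * dist (toL2 z₁) (toL2 z₂)) :=
          ENNReal.ofReal_le_ofReal (by linarith)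
end
end

section
/- Let ψ : (0,1] → (0,∞) be increasing with lim_{t→0⁺} ψ(t)/t = 0, and Ω_ψ the associated cuspidal domain in ℝ^n. Then the measure density condition fails: there is no constant C > 0 such that |B(z,r)| ≤ C |B(z,r) ∩ Ω_ψ| for all z ∈ Ω_ψ and all 0 < r < 1, where |·| denotes Lebesgue measure. -/
open MeasureTheory Set Metric Filter
open scoped ENNReal Topology

noncomputable section

/-- Euclidean distance on `ℝ × ℝ^{n-1}`. -/
def dist2 {m : ℕ} (z w : ℝ × EuclideanSpace ℝ (Fin m)) : ℝ :=
  Real.sqrt ((z.1 - w.1) ^ 2 + ‖z.2 - w.2‖ ^ 2)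

/-- Euclidean open ball in `ℝ × ℝ^{n-1}`. -/
def eball {m : ℕ} (z : ℝ × EuclideanSpace ℝ (Fin m)) (r : ℝ) :
    Set (ℝ × EuclideanSpace ℝ (Fin m)) :=
  {w | dist2 w z < r}

/-- If `ψ : (0,1] → (0,∞)` is increasing with `lim_{t→0⁺} ψ(t)/t = 0`
(extended by `ψ(t) = ψ(1)` on `(1,2)`), then the measure density condition fails for the
cuspidal domain `Ω_ψ`: there is no `C > 0` with
`|B(z,r)| ≤ C |B(z,r) ∩ Ω_ψ|` for all `z ∈ Ω_ψ` and `0 < r < 1`. -/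
theorem cusp_measure_density_fails {m : ℕ} (hm : 1 ≤ m) (ψ : ℝ → ℝ)
    (hpos : ∀ t ∈ Ioc (0:ℝ) 1, 0 < ψ t)
    (hmono : ∀ s ∈ Ioc (0:ℝ) 1, ∀ t ∈ Ioc (0:ℝ) 1, s ≤ t → ψ s ≤ ψ t)
    (hext : ∀ t ∈ Ioo (1:ℝ) 2, ψ t = ψ 1)
    (hlim : Tendsto (fun t => ψ t / t) (nhdsWithin 0 (Ioi 0)) (nhds 0)) :
    ¬ ∃ C : ℝ, 0 < C ∧
      ∀ z ∈ {z : ℝ × EuclideanSpace ℝ (Fin m) | z.1 ∈ Ioo (0:ℝ) 2 ∧ ‖z.2‖ < ψ z.1},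
      ∀ r ∈ Ioo (0:ℝ) 1,
        volume (eball z r) ≤ ENNReal.ofReal C *
          volume (eball z r ∩
            {z : ℝ × EuclideanSpace ℝ (Fin m) | z.1 ∈ Ioo (0:ℝ) 2 ∧ ‖z.2‖ < ψ z.1}) := by
  rintro ⟨C, hC, H⟩
  haveI : Nontrivial (EuclideanSpace ℝ (Fin m)) :=
    ⟨⟨0, EuclideanSpace.single ⟨0, hm⟩ 1, by
      intro h
      have := congrArg (fun f => f ⟨0, hm⟩) h
      simp [EuclideanSpace.single] at this⟩⟩
  set Ω : Set (ℝ × EuclideanSpace ℝ (Fin m)) :=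
    {z : ℝ × EuclideanSpace ℝ (Fin m) | z.1 ∈ Ioo (0:ℝ) 2 ∧ ‖z.2‖ < ψ z.1} with hΩ
  set ν := volume (ball (0 : EuclideanSpace ℝ (Fin m)) 1) with hν
  have hν0 : ν ≠ 0 := (measure_ball_pos volume 0 one_pos).ne'
  have hνtop : ν ≠ ⊤ := measure_ball_lt_top.ne
  set a : ℝ := (1/2:ℝ)^m / (2*C) with ha
  have ha0 : 0 < a := by positivity
  -- Key inequality for every small t
  have key : ∀ t : ℝ, 0 < t → t < 1/2 → a ≤ (ψ (2*t) / t)^m := by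
    intro t ht ht2
    have hψ2t : 0 < ψ (2*t) := hpos (2*t) ⟨by linarith, by linarith⟩
    set z : ℝ × EuclideanSpace ℝ (Fin m) := (t, 0) with hzdef
    have hz : z ∈ Ω := by
      refine ⟨⟨ht, by linarith⟩, ?_⟩
      simpa [hzdef] using hpos t ⟨ht, by linarith⟩
    have hball := H z hz t ⟨ht, by linarith⟩
    -- lower bound for volume of the ball
    have hsub1 : (Ioo (t - t/2) (t + t/2)) ×ˢ ball (0 : EuclideanSpace ℝ (Fin m)) (t/2)
        ⊆ eball z t := by
      rintro ⟨w1, w2⟩ ⟨hw1, hw2⟩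
      simp only [_root_.eball, dist2, mem_setOf_eq]
      rw [Real.sqrt_lt' ht]
      have h1 : |w1 - t| < t/2 := by
        rw [abs_sub_lt_iff]
        constructor <;> [linarith [hw1.2]; linarith [hw1.1]]
      have h1' : (w1 - t)^2 < (t/2)^2 := by
        have := abs_nonneg (w1 - t)
        nlinarith [sq_abs (w1 - t)]
      have h2 : ‖w2 - (0:EuclideanSpace ℝ (Fin m))‖ < t/2 := by
        simpa [dist_eq_norm] using hw2
      have h2' : ‖w2 - (0:EuclideanSpace ℝ (Fin m))‖^2 < (t/2)^2 := by
        nlinarith [norm_nonneg (w2 - (0:EuclideanSpace ℝ (Fin m)))]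
      show (w1 - t)^2 + ‖w2 - (0:EuclideanSpace ℝ (Fin m))‖^2 < t^2
      nlinarith
    have hLB : ENNReal.ofReal t * (ENNReal.ofReal ((t/2)^m) * ν) ≤ volume (eball z t) := by
      have := measure_mono hsub1 (μ := volume)
      have hvol : volume ((Ioo (t - t/2) (t + t/2)) ×ˢ
          ball (0 : EuclideanSpace ℝ (Fin m)) (t/2)) =
          ENNReal.ofReal t * (ENNReal.ofReal ((t/2)^m) * ν) := by
        rw [Measure.volume_eq_prod, Measure.prod_prod, Real.volume_Ioo,
          Measure.addHaar_ball volume 0 (by linarith : (0:ℝ) ≤ t/2),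
          finrank_euclideanSpace_fin]
        ring_nf
        rfl
      rw [hvol] at this
      exact this
    -- upper bound for the intersection
    have hsub2 : eball z t ∩ Ω ⊆
        (Ioo (0:ℝ) (2*t)) ×ˢ ball (0 : EuclideanSpace ℝ (Fin m)) (ψ (2*t)) := by
      rintro ⟨w1, w2⟩ ⟨hwe, hwΩ⟩
      simp only [_root_.eball, dist2, mem_setOf_eq, hzdef] at hwe
      rw [Real.sqrt_lt' ht] at hwe
      obtain ⟨⟨hw1a, _⟩, hw2⟩ := hwΩ
      have hnn : (0:ℝ) ≤ ‖w2 - (0:EuclideanSpace ℝ (Fin m))‖^2 := sq_nonneg _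
      have hw1b : w1 < 2*t := by nlinarith
      refine ⟨⟨hw1a, hw1b⟩, ?_⟩
      have hψle : ψ w1 ≤ ψ (2*t) :=
        hmono w1 ⟨hw1a, by linarith⟩ (2*t) ⟨by linarith, by linarith⟩ (le_of_lt hw1b)
      have : ‖w2‖ < ψ (2*t) := lt_of_lt_of_le hw2 hψle
      simpa [dist_eq_norm] using this
    have hUB : volume (eball z t ∩ Ω) ≤
        ENNReal.ofReal (2*t) * (ENNReal.ofReal (ψ (2*t)^m) * ν) := by
      have := measure_mono hsub2 (μ := volume)
      have hvol : volume ((Ioo (0:ℝ) (2*t)) ×ˢ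
          ball (0 : EuclideanSpace ℝ (Fin m)) (ψ (2*t))) =
          ENNReal.ofReal (2*t) * (ENNReal.ofReal (ψ (2*t)^m) * ν) := by
        rw [Measure.volume_eq_prod, Measure.prod_prod, Real.volume_Ioo,
          Measure.addHaar_ball volume 0 (le_of_lt hψ2t), finrank_euclideanSpace_fin]
        ring_nf
        rfl
      rw [hvol] at this
      exact this
    -- combine
    have hcomb : ENNReal.ofReal t * (ENNReal.ofReal ((t/2)^m) * ν) ≤
        ENNReal.ofReal C * (ENNReal.ofReal (2*t) * (ENNReal.ofReal (ψ (2*t)^m) * ν)) :=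
      le_trans hLB (le_trans hball (mul_le_mul_right hUB _))
    have hreal : t * (t/2)^m ≤ C * (2*t * ψ (2*t)^m) := by
      have e1 : ENNReal.ofReal t * (ENNReal.ofReal ((t/2)^m) * ν) =
          ENNReal.ofReal (t * (t/2)^m) * ν := by
        rw [ENNReal.ofReal_mul (le_of_lt ht), mul_assoc]
      have e2 : ENNReal.ofReal C * (ENNReal.ofReal (2*t) * (ENNReal.ofReal (ψ (2*t)^m) * ν)) =
          ENNReal.ofReal (C * (2*t * ψ (2*t)^m)) * ν := by
        rw [ENNReal.ofReal_mul (le_of_lt hC), ENNReal.ofReal_mul (by linarith : (0:ℝ) ≤ 2*t),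
          mul_assoc, mul_assoc]
      rw [e1, e2, ENNReal.mul_le_mul_iff_left hν0 hνtop] at hcomb
      exact (ENNReal.ofReal_le_ofReal_iff (by positivity)).mp hcomb
    have h2 : (t/2)^m ≤ 2*C*ψ (2*t)^m := by
      have := (mul_le_mul_iff_right₀ ht).mp
        (by linarith : t * (t/2)^m ≤ t * (2*C*ψ (2*t)^m))
      exact this
    have h3 : (1/2:ℝ)^m * t^m ≤ 2*C*ψ (2*t)^m := by
      have : ((1:ℝ)/2)^m * t^m = (t/2)^m := by
        rw [← mul_pow]; ring_nf
      rw [this]; exact h2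
    rw [div_pow, le_div_iff₀ (pow_pos ht m)]
    rw [ha, div_mul_eq_mul_div, div_le_iff₀ (by linarith : (0:ℝ) < 2*C)]
    calc (1/2:ℝ)^m * t^m ≤ 2*C*ψ (2*t)^m := h3
      _ = ψ (2*t)^m * (2*C) := by ring
  -- now derive a contradiction from the limit
  have h2t : Tendsto (fun t : ℝ => 2*t) (𝓝[>] (0:ℝ)) (𝓝[>] (0:ℝ)) := by
    apply tendsto_nhdsWithin_of_tendsto_nhds_of_eventually_within
    · have : Tendsto (fun t : ℝ => 2*t) (𝓝 (0:ℝ)) (𝓝 (2*0)) :=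
        (continuous_const.mul continuous_id).tendsto 0
      simpa using this.mono_left nhdsWithin_le_nhds
    · filter_upwards [self_mem_nhdsWithin] with t ht
      exact mul_pos two_pos (mem_Ioi.mp ht)
  have hA : Tendsto (fun t : ℝ => ψ (2*t) / (2*t)) (𝓝[>] (0:ℝ)) (𝓝 0) := hlim.comp h2t
  have hB : Tendsto (fun t : ℝ => ψ (2*t) / t) (𝓝[>] (0:ℝ)) (𝓝 0) := by
    have h2A : Tendsto (fun t : ℝ => 2 * (ψ (2*t) / (2*t))) (𝓝[>] (0:ℝ)) (𝓝 (2*0)) :=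
      hA.const_mul 2
    rw [mul_zero] at h2A
    refine h2A.congr' ?_
    filter_upwards [self_mem_nhdsWithin] with t ht
    have ht' : t ≠ 0 := ne_of_gt ht
    field_simp
  have hBm : Tendsto (fun t : ℝ => (ψ (2*t) / t)^m) (𝓝[>] (0:ℝ)) (𝓝 0) := by
    have := hB.pow m
    rwa [zero_pow (by omega : m ≠ 0)] at this
  have hev : ∀ᶠ t in 𝓝[>] (0:ℝ), (ψ (2*t) / t)^m < a := hBm.eventually_lt_const ha0
  have hev2 : ∀ᶠ t in 𝓝[>] (0:ℝ), t < 1/2 :=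
    eventually_nhdsWithin_of_eventually_nhds (eventually_lt_nhds (by norm_num : (0:ℝ) < 1/2))
  obtain ⟨t, hlt, ht2, ht⟩ := (hev.and (hev2.and self_mem_nhdsWithin)).exists
  exact absurd (key t ht ht2) (not_le.mpr hlt)
end
end
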